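/- arXiv:1502.05903 — 3 statements merged into one kernel-verified Lean document; each statement's English description precedes it below -/
import Mathlib

section
/- For all positive real numbers L₁, L₂, A₁, A₂, A₃, we have (L₁+L₂)·(1/(A₁+A₂) + 1/A₃) > min{ L₁·(1/A₁ + 1/(A₂+A₃)), L₂·(1/A₂ + 1/(A₁+A₃)) }. -/
theorem stmt_0 (L₁ L₂ A₁ A₂ A₃ : ℝ) (hL₁ : 0 < L₁) (hL₂ : 0 < L₂)
    (hA₁ : 0 < A₁) (hA₂ : 0 < A₂) (hA₃ : 0 < A₃) :
    (L₁ + L₂) * (1 / (A₁ + A₂) + 1 / A₃) >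
      min (L₁ * (1 / A₁ + 1 / (A₂ + A₃))) (L₂ * (1 / A₂ + 1 / (A₁ + A₃))) := by
  by_contra h
  push_neg at h
  rw [le_min_iff] at h
  obtain ⟨h1, h2⟩ := h
  set x : ℝ := 1 / (A₁ + A₂) + 1 / A₃ with hx
  set y₁ : ℝ := 1 / A₁ + 1 / (A₂ + A₃) with hy₁
  set y₂ : ℝ := 1 / A₂ + 1 / (A₁ + A₃) with hy₂
  clear_value x y₁ y₂
  have hxpos : 0 < x := by rw [hx]; positivity
  have hy₁pos : 0 < y₁ := by rw [hy₁]; positivity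
  have hy₂pos : 0 < y₂ := by rw [hy₂]; positivity
  have h1' : L₂ * x ≤ L₁ * (y₁ - x) := by rw [mul_sub]; linarith
  have h2' : L₁ * x ≤ L₂ * (y₂ - x) := by rw [mul_sub]; linarith
  have hn1 : 0 ≤ L₁ * (y₁ - x) := le_trans (by positivity) h1'
  have hn2 : 0 ≤ L₁ * x := by positivity
  have h3 : (L₂ * x) * (L₁ * x) ≤ (L₁ * (y₁ - x)) * (L₂ * (y₂ - x)) :=
    mul_le_mul h1' h2' hn2 hn1
  have hLL : 0 < L₁ * L₂ := mul_pos hL₁ hL₂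
  have h3' : (L₁ * L₂) * (x * x) ≤ (L₁ * L₂) * ((y₁ - x) * (y₂ - x)) := by
    ring_nf at h3 ⊢; linarith
  have h4' : x * x ≤ (y₁ - x) * (y₂ - x) := le_of_mul_le_mul_left h3' hLL
  have h4 : x * (y₁ + y₂) ≤ y₁ * y₂ := by nlinarith [h4']
  -- But in fact x * (y₁ + y₂) > y₁ * y₂:
  have h5 : y₁ * y₂ < x * (y₁ + y₂) := by
    have hS : (0:ℝ) < A₁ + A₂ + A₃ := by linarith
    have h12 : 0 < A₁ + A₂ := by linarith
    have h23 : 0 < A₂ + A₃ := by linarith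
    have h13 : 0 < A₁ + A₃ := by linarith
    have e1 : 1 / y₁ = A₁ * (A₂ + A₃) / (A₁ + A₂ + A₃) := by
      rw [hy₁]; field_simp; ring
    have e2 : 1 / y₂ = A₂ * (A₁ + A₃) / (A₁ + A₂ + A₃) := by
      rw [hy₂]; field_simp; ring
    have e3 : 1 / x = A₃ * (A₁ + A₂) / (A₁ + A₂ + A₃) := by
      rw [hx]; field_simp; ring
    have h6 : (1:ℝ) / x < 1 / y₁ + 1 / y₂ := by
      rw [e1, e2, e3, ← add_div, div_lt_div_iff_of_pos_right hS]
      nlinarith [mul_pos hA₁ hA₂]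
    rw [div_add_div _ _ (ne_of_gt hy₁pos) (ne_of_gt hy₂pos),
        div_lt_div_iff₀ hxpos (by positivity)] at h6
    nlinarith [h6]
  linarith
end

section
/- For all positive real numbers L₁, L₂, A₁, A₂, A₃, we have (L₁+L₂)²·(1/(A₁+A₂) + 1/A₃) > min{ L₁²·(1/A₁ + 1/(A₂+A₃)), L₂²·(1/A₂ + 1/(A₁+A₃)) }. -/
set_option maxHeartbeats 1000000


theorem stmt_1 (L₁ L₂ A₁ A₂ A₃ : ℝ) (hL₁ : 0 < L₁) (hL₂ : 0 < L₂)
    (hA₁ : 0 < A₁) (hA₂ : 0 < A₂) (hA₃ : 0 < A₃) :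
    (L₁ + L₂) ^ 2 * (1 / (A₁ + A₂) + 1 / A₃) >
      min (L₁ ^ 2 * (1 / A₁ + 1 / (A₂ + A₃))) (L₂ ^ 2 * (1 / A₂ + 1 / (A₁ + A₃))) := by
  have hF₁p : (0:ℝ) < 1 / A₁ + 1 / (A₂ + A₃) := by positivity
  have hF₂p : (0:ℝ) < 1 / A₂ + 1 / (A₁ + A₃) := by positivity
  have hF₃p : (0:ℝ) < 1 / (A₁ + A₂) + 1 / A₃ := by positivity
  set F₁ := 1 / A₁ + 1 / (A₂ + A₃) with hF₁
  set F₂ := 1 / A₂ + 1 / (A₁ + A₃) with hF₂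
  set F₃ := 1 / (A₁ + A₂) + 1 / A₃ with hF₃
  by_contra hc
  push_neg at hc
  rw [le_min_iff] at hc
  obtain ⟨h1, h2⟩ := hc
  set s₁ := Real.sqrt F₁ with hs₁def
  set s₂ := Real.sqrt F₂ with hs₂def
  set s₃ := Real.sqrt F₃ with hs₃def
  have hs₁ : 0 < s₁ := Real.sqrt_pos.mpr hF₁p
  have hs₂ : 0 < s₂ := Real.sqrt_pos.mpr hF₂p
  have hs₃ : 0 < s₃ := Real.sqrt_pos.mpr hF₃p
  have hq₁ : s₁ ^ 2 = F₁ := Real.sq_sqrt hF₁p.le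
  have hq₂ : s₂ ^ 2 = F₂ := Real.sq_sqrt hF₂p.le
  have hq₃ : s₃ ^ 2 = F₃ := Real.sq_sqrt hF₃p.le
  have hLp : 0 < L₁ + L₂ := by linarith
  have e1 : (L₁ + L₂) * s₃ ≤ L₁ * s₁ := by
    have h := Real.sqrt_le_sqrt h1
    rwa [Real.sqrt_mul (by positivity) F₃, Real.sqrt_mul (by positivity) F₁,
      Real.sqrt_sq hLp.le, Real.sqrt_sq hL₁.le] at h
  have e2 : (L₁ + L₂) * s₃ ≤ L₂ * s₂ := by
    have h := Real.sqrt_le_sqrt h2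
    rwa [Real.sqrt_mul (by positivity) F₃, Real.sqrt_mul (by positivity) F₂,
      Real.sqrt_sq hLp.le, Real.sqrt_sq hL₂.le] at h
  clear_value s₁ s₂ s₃ F₁ F₂ F₃
  -- combine: (L₁+L₂) * (s₃*(s₁+s₂)) ≤ (L₁+L₂) * (s₁*s₂)
  have e3 : s₃ * (s₁ + s₂) ≤ s₁ * s₂ := by
    have c1 := mul_le_mul_of_nonneg_right e1 hs₂.le
    have c2 := mul_le_mul_of_nonneg_right e2 hs₁.le
    have : (L₁ + L₂) * (s₃ * (s₁ + s₂)) ≤ (L₁ + L₂) * (s₁ * s₂) := by nlinarith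
    exact le_of_mul_le_mul_left this hLp
  -- squaring gives F₃*(s₁+s₂)^2 ≤ F₁*F₂
  have e4 : F₃ * (s₁ + s₂) ^ 2 ≤ F₁ * F₂ := by
    have h := mul_self_le_mul_self (by positivity) e3
    nlinarith
  -- algebraic key: F₃ * (F₁ + F₂) > F₁ * F₂
  have key : F₁ * F₂ < F₃ * (F₁ + F₂) := by
    have expand : F₃ * (F₁ + F₂) - F₁ * F₂
        = 2 * (A₁ + A₂ + A₃) ^ 2 / ((A₂ + A₃) * (A₁ + A₃) * (A₁ + A₂) * A₃) := by
      rw [hF₁, hF₂, hF₃]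
      field_simp
      ring
    have hpos : 0 < 2 * (A₁ + A₂ + A₃) ^ 2 / ((A₂ + A₃) * (A₁ + A₃) * (A₁ + A₂) * A₃) := by
      positivity
    linarith
  have contr : (s₁ + s₂) ^ 2 < s₁ ^ 2 + s₂ ^ 2 := by
    have h5 : F₃ * (s₁ + s₂) ^ 2 < F₃ * (s₁ ^ 2 + s₂ ^ 2) := by
      rw [hq₁, hq₂]; linarith
    exact lt_of_mul_lt_mul_left h5 hF₃p.le
  nlinarith [mul_pos hs₁ hs₂]
end

section
/- Let A > 0 and let I : (0,A) → [0,∞) with I(V) = I(A−V). Suppose liminf_{V→0⁺} I(V)^{n+1}/V^n ≥ C₂ > 0 for some integer n ≥ 1, and that inf_{V∈(0,A)} I(V)^{n+1}·(1/V + 1/(A−V))^n < C₂. Then any sequence V_i ∈ (0,A) with I(V_i)^{n+1}·(1/V_i + 1/(A−V_i))^n converging to this infimum stays in a compact subinterval [δ, A−δ] for some δ > 0 (after discarding finitely many terms). -/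
theorem stmt_7 (A C₂ : ℝ) (hA : 0 < A) (hC₂ : 0 < C₂) (n : ℕ) (hn : 1 ≤ n)
    (I : ℝ → ℝ)
    (hnonneg : ∀ V ∈ Set.Ioo 0 A, 0 ≤ I V)
    (hsym : ∀ V ∈ Set.Ioo 0 A, I V = I (A - V))
    (hliminf :
      Filter.liminf (fun V => I V ^ (n + 1) / V ^ n) (nhdsWithin 0 (Set.Ioo 0 A)) ≥ C₂)
    (hinf :
      sInf ((fun V => I V ^ (n + 1) * (1 / V + 1 / (A - V)) ^ n) '' Set.Ioo 0 A) < C₂)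
    (V : ℕ → ℝ) (hV : ∀ i, V i ∈ Set.Ioo 0 A)
    (hconv : Filter.Tendsto (fun i => I (V i) ^ (n + 1) * (1 / (V i) + 1 / (A - V i)) ^ n)
      Filter.atTop
      (nhds (sInf ((fun V => I V ^ (n + 1) * (1 / V + 1 / (A - V)) ^ n) '' Set.Ioo 0 A)))) :
    ∃ δ > 0, ∃ N : ℕ, ∀ i ≥ N, V i ∈ Set.Icc δ (A - δ) := by
  set m := sInf ((fun V => I V ^ (n + 1) * (1 / V + 1 / (A - V)) ^ n) '' Set.Ioo 0 A) with hm
  set c := (m + C₂) / 2 with hc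
  have hmc : m < c := by simp [hc]; linarith
  have hcC : c < C₂ := by simp [hc]; linarith
  -- key pointwise bound
  have key : ∀ W ∈ Set.Ioo (0:ℝ) A,
      I W ^ (n + 1) / W ^ n ≤ I W ^ (n + 1) * (1 / W + 1 / (A - W)) ^ n := by
    intro W hW
    have hW0 : 0 < W := hW.1
    have hWA : 0 < A - W := by linarith [hW.2]
    have h1 : (1 / W) ^ n ≤ (1 / W + 1 / (A - W)) ^ n := by
      apply pow_le_pow_left₀ (by positivity)
      have : 0 ≤ 1 / (A - W) := by positivity
      linarith
    calc I W ^ (n + 1) / W ^ n = I W ^ (n + 1) * (1 / W) ^ n := by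
          rw [div_pow, one_pow, mul_one_div]
      _ ≤ I W ^ (n + 1) * (1 / W + 1 / (A - W)) ^ n := by
          apply mul_le_mul_of_nonneg_left h1 (pow_nonneg (hnonneg W hW) _)
  -- symmetry of the functional
  have symfun : ∀ W ∈ Set.Ioo (0:ℝ) A,
      I (A - W) ^ (n + 1) * (1 / (A - W) + 1 / (A - (A - W))) ^ n
        = I W ^ (n + 1) * (1 / W + 1 / (A - W)) ^ n := by
    intro W hW
    rw [← hsym W hW]
    ring_nf
  -- from liminf: eventually > c near 0
  have hbdd : Filter.IsBoundedUnder (· ≥ ·) (nhdsWithin 0 (Set.Ioo 0 A))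
      (fun V => I V ^ (n + 1) / V ^ n) := by
    refine ⟨0, Filter.eventually_map.2 ?_⟩
    exact eventually_nhdsWithin_of_forall fun W hW =>
      div_nonneg (pow_nonneg (hnonneg W hW) _) (pow_nonneg hW.1.le _)
  have hev : ∀ᶠ W in nhdsWithin 0 (Set.Ioo 0 A), c < I W ^ (n + 1) / W ^ n :=
    Filter.eventually_lt_of_lt_liminf (lt_of_lt_of_le hcC hliminf) hbdd
  rw [Filter.eventually_iff, Metric.mem_nhdsWithin_iff] at hev
  obtain ⟨δ₀, hδ₀, hball⟩ := hev
  -- small V gives big functional value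
  have small : ∀ W ∈ Set.Ioo (0:ℝ) A, W < δ₀ →
      c < I W ^ (n + 1) * (1 / W + 1 / (A - W)) ^ n := by
    intro W hW hWδ
    have : W ∈ Metric.ball (0:ℝ) δ₀ ∩ Set.Ioo 0 A := by
      refine ⟨?_, hW⟩
      simp [Real.norm_eq_abs, abs_of_pos hW.1, hWδ]
    exact lt_of_lt_of_le (hball this) (key W hW)
  -- eventually the sequence value < c
  have hevseq : ∀ᶠ i in Filter.atTop,
      I (V i) ^ (n + 1) * (1 / (V i) + 1 / (A - V i)) ^ n < c :=
    hconv.eventually_lt_const hmc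
  obtain ⟨N, hN⟩ := Filter.eventually_atTop.1 hevseq
  refine ⟨min δ₀ (A / 2), lt_min hδ₀ (by linarith), N, fun i hi => ?_⟩
  have hVi := hV i
  have hlt := hN i hi
  have h1 : δ₀ ≤ V i := by
    by_contra h
    push_neg at h
    exact absurd (small (V i) hVi h) (not_lt.2 hlt.le)
  have h2 : V i ≤ A - δ₀ := by
    by_contra h
    push_neg at h
    have hW : A - V i ∈ Set.Ioo (0:ℝ) A := ⟨by linarith [hVi.2], by linarith [hVi.1]⟩
    have hWδ : A - V i < δ₀ := by linarith
    have := small (A - V i) hW hWδ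
    rw [symfun (V i) hVi] at this
    exact absurd this (not_lt.2 hlt.le)
  constructor
  · exact le_trans (min_le_left _ _) h1
  · have : A - min δ₀ (A / 2) ≥ A - δ₀ := by
      have := min_le_left δ₀ (A / 2); linarith
    linarith
end
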